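/- Let q > 0 be real and let t₁, t₂ be coprime integers. Let H_q(k), for k ∈ ℝ², be the 2×2 complex matrix with entries H₁₁ = 3+q, H₁₂ = −1−e^{ik₁}−e^{ik₂}, H₂₁ = −1−e^{−ik₁}−e^{−ik₂}, H₂₂ = 3−q. Then ⋃ { spectrum(H_q(k)) : k ∈ ℝ², t₁k₁ + t₂k₂ ∈ 2πℤ } = [3−√(9+q²), 3−q] ∪ [3+q, 3+√(9+q²)] if and only if t₁ − t₂ is divisible by 3. Moreover, for arbitrary integers t₁, t₂ (not necessarily coprime): there exists k ∈ ℝ² with 1 + e^{ik₁} + e^{ik₂} = 0 and t₁k₁ + t₂k₂ ∈ 2πℤ if and only if 3 divides t₁ − t₂. -/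

import Mathlib

open scoped Real

/-- The Floquet matrix of the Schrödinger operator on the hexagonal lattice with
potential `±q` on the two fundamental vertices. -/
noncomputable def hexFloquet (q k₁ k₂ : ℝ) : Matrix (Fin 2) (Fin 2) ℂ :=
  !![((3 + q : ℝ) : ℂ), -1 - Complex.exp (Complex.I * k₁) - Complex.exp (Complex.I * k₂);
     -1 - Complex.exp (-(Complex.I * k₁)) - Complex.exp (-(Complex.I * k₂)), ((3 - q : ℝ) : ℂ)]

noncomputable def wfun (k₁ k₂ : ℝ) : ℝ :=
  Complex.normSq (1 + Complex.exp (Complex.I * k₁) + Complex.exp (Complex.I * k₂))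

lemma wfun_nonneg (k₁ k₂ : ℝ) : 0 ≤ wfun k₁ k₂ := Complex.normSq_nonneg _

lemma abs_exp_I_mul (k : ℝ) : ‖Complex.exp (Complex.I * k)‖ = 1 := by
  rw [Complex.norm_exp]
  simp

lemma wfun_le_nine (k₁ k₂ : ℝ) : wfun k₁ k₂ ≤ 9 := by
  have h : ‖1 + Complex.exp (Complex.I * k₁) + Complex.exp (Complex.I * k₂)‖ ≤ 3 := by
    calc ‖1 + Complex.exp (Complex.I * k₁) + Complex.exp (Complex.I * k₂)‖
        ≤ ‖1 + Complex.exp (Complex.I * k₁)‖ +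
            ‖Complex.exp (Complex.I * k₂)‖ := norm_add_le _ _
      _ ≤ (‖(1:ℂ)‖ + ‖Complex.exp (Complex.I * k₁)‖) +
            ‖Complex.exp (Complex.I * k₂)‖ := by
            exact add_le_add_left (norm_add_le (1:ℂ) (Complex.exp (Complex.I * k₁))) _
      _ = 3 := by rw [abs_exp_I_mul, abs_exp_I_mul]; norm_num
  rw [wfun, ← Complex.sq_norm]
  nlinarith [norm_nonneg (1 + Complex.exp (Complex.I * k₁) + Complex.exp (Complex.I * k₂))]

lemma conj_aux (k₁ k₂ : ℝ) :
    (starRingEnd ℂ) (1 + Complex.exp (Complex.I * k₁) + Complex.exp (Complex.I * k₂)) =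
      1 + Complex.exp (-(Complex.I * k₁)) + Complex.exp (-(Complex.I * k₂)) := by
  simp only [map_add, map_one, ← Complex.exp_conj, map_mul, Complex.conj_I,
    Complex.conj_ofReal, neg_mul]

lemma mem_spec_iff (q k₁ k₂ : ℝ) (z : ℂ) :
    z ∈ spectrum ℂ (hexFloquet q k₁ k₂) ↔ (z - 3)^2 = (q:ℂ)^2 + (wfun k₁ k₂ : ℝ) := by
  rw [spectrum.mem_iff, Matrix.isUnit_iff_isUnit_det, isUnit_iff_ne_zero, not_not,
    Matrix.det_fin_two]
  have h1 : ∀ i j, (algebraMap ℂ (Matrix (Fin 2) (Fin 2) ℂ) z - hexFloquet q k₁ k₂) i j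
      = (if i = j then z else 0) - hexFloquet q k₁ k₂ i j := by
    intro i j
    simp [Matrix.algebraMap_matrix_apply, Matrix.sub_apply]
  rw [h1, h1, h1, h1]
  have key : ((wfun k₁ k₂ : ℝ) : ℂ) =
      (1 + Complex.exp (Complex.I * k₁) + Complex.exp (Complex.I * k₂)) *
      (1 + Complex.exp (-(Complex.I * k₁)) + Complex.exp (-(Complex.I * k₂))) := by
    rw [wfun, ← conj_aux k₁ k₂, Complex.mul_conj]
  simp only [hexFloquet, Matrix.cons_val', Matrix.cons_val_zero, Matrix.cons_val_one,
    Matrix.head_cons, Matrix.head_fin_const, Matrix.empty_val', Matrix.cons_val_fin_one,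
    Matrix.of_apply]
  constructor
  · intro h
    rw [key]
    push_cast at h
    ring_nf
    ring_nf at h
    linear_combination h
  · intro h
    rw [key] at h
    push_cast at h ⊢
    linear_combination h

lemma sq_eq_iff' (z : ℂ) (r : ℝ) :
    (z - 3)^2 = ((r:ℂ))^2 ↔ z = ((3 - r : ℝ):ℂ) ∨ z = ((3 + r : ℝ):ℂ) := by
  constructor
  · intro h
    have h2 : (z - 3 - r) * (z - 3 + r) = 0 := by linear_combination h
    rcases mul_eq_zero.1 h2 with h' | h'
    · right; push_cast; linear_combination h'
    · left; push_cast; linear_combination h'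
  · rintro (rfl | rfl) <;> push_cast <;> ring

lemma spec_eq (q : ℝ) (k₁ k₂ : ℝ) :
    spectrum ℂ (hexFloquet q k₁ k₂) =
      {((3 - Real.sqrt (q^2 + wfun k₁ k₂) : ℝ) : ℂ),
       ((3 + Real.sqrt (q^2 + wfun k₁ k₂) : ℝ) : ℂ)} := by
  ext z
  rw [mem_spec_iff]
  have hnn : (0:ℝ) ≤ q^2 + wfun k₁ k₂ := by
    have := wfun_nonneg k₁ k₂; positivity
  have hr : ((q:ℂ))^2 + ((wfun k₁ k₂ : ℝ):ℂ) = ((Real.sqrt (q^2 + wfun k₁ k₂) : ℝ):ℂ)^2 := by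
    rw [show ((Real.sqrt (q^2 + wfun k₁ k₂) : ℝ):ℂ)^2 = ((q^2 + wfun k₁ k₂ : ℝ):ℂ) by
      rw [← Complex.ofReal_pow, Real.sq_sqrt hnn]]
    push_cast
    ring
  rw [hr, sq_eq_iff']
  simp [Set.mem_insert_iff, Set.mem_singleton_iff]

lemma zero_forward (s₁ s₂ : ℤ) (k₁ k₂ : ℝ)
    (h : 1 + Complex.exp (Complex.I * k₁) + Complex.exp (Complex.I * k₂) = 0)
    (n : ℤ) (hn : (s₁ : ℝ) * k₁ + (s₂ : ℝ) * k₂ = 2*π*n) : (3:ℤ) ∣ s₁ - s₂ := by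
  have hconj : 1 + Complex.exp (-(Complex.I * k₁)) + Complex.exp (-(Complex.I * k₂)) = 0 := by
    have := congrArg (starRingEnd ℂ) h
    simpa [← Complex.exp_conj, Complex.conj_I, neg_mul, Complex.conj_ofReal] using this
  set u := Complex.exp (Complex.I * k₁) with hu
  set v := Complex.exp (Complex.I * k₂) with hv
  set u' := Complex.exp (-(Complex.I * k₁)) with hu'
  set v' := Complex.exp (-(Complex.I * k₂)) with hv'
  have huinv : u * u' = 1 := by rw [hu, hu', ← Complex.exp_add]; simp
  have hvinv : v * v' = 1 := by rw [hv, hv', ← Complex.exp_add]; simp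
  have hquad : u^2 + u + 1 = 0 := by
    have e3 : (-1 - u) * (-1 - u') = 1 := by
      have e1 : v = -1 - u := by linear_combination h
      have e2 : v' = -1 - u' := by linear_combination hconj
      rw [← e1, ← e2]; exact hvinv
    have e4 : u + u' = -1 := by linear_combination e3 - huinv
    linear_combination u * e4 - huinv
  have hcube : Complex.exp ((3:ℕ) * (Complex.I * k₁)) = 1 := by
    rw [Complex.exp_nat_mul]
    linear_combination (u - 1) * hquad
  rw [Complex.exp_eq_one_iff] at hcube
  obtain ⟨m, hm⟩ := hcube
  have hm' : 3 * k₁ = 2 * π * m := by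
    have := congrArg Complex.im hm
    simp at this
    linarith
  have hmnd : ¬ (3:ℤ) ∣ m := by
    rintro ⟨m', rfl⟩
    have hk₁' : k₁ = 2 * π * m' := by
      have : (3:ℝ) * k₁ = 3 * (2 * π * m') := by push_cast at hm' ⊢; linarith
      linarith
    have hu1 : u = 1 := by
      rw [hu, show Complex.I * (k₁:ℂ) = (m':ℂ) * (2 * (π:ℂ) * Complex.I) by
        rw [hk₁']; push_cast; ring]
      exact Complex.exp_int_mul_two_pi_mul_I m'
    rw [hu1] at hquad
    norm_num at hquad
  have hv2 : v = u^2 := by linear_combination h - hquad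
  have hee : Complex.exp (Complex.I * k₂) = Complex.exp ((2:ℕ) * (Complex.I * k₁)) := by
    rw [Complex.exp_nat_mul]
    exact hv2
  rw [Complex.exp_eq_exp_iff_exists_int] at hee
  obtain ⟨j, hj⟩ := hee
  have hj' : k₂ = 2 * k₁ + 2 * π * j := by
    have := congrArg Complex.im hj
    simp at this
    linarith
  have hzero : 2 * π * (((s₁ + 2*s₂) * m + 3*s₂*j - 3*n : ℤ) : ℝ) = 0 := by
    push_cast
    linear_combination 3 * hn - ((s₁:ℝ) + 2*(s₂:ℝ)) * hm' - 3 * (s₂:ℝ) * hj'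
  have hX : ((s₁ + 2*s₂) * m + 3*s₂*j - 3*n : ℤ) = 0 := by
    have h2π : (2 * π : ℝ) ≠ 0 := by positivity
    rcases mul_eq_zero.1 hzero with h' | h'
    · exact absurd h' h2π
    · exact_mod_cast h'
  have hdvd : (3:ℤ) ∣ (s₁ + 2*s₂) * m := ⟨n - s₂*j, by linarith⟩
  rcases (Int.prime_three.dvd_mul.mp hdvd) with h' | h'
  · omega
  · exact absurd h' hmnd

lemma exp_zero_pt : 1 + Complex.exp (Complex.I * ((2*π/3 : ℝ):ℂ))
    + Complex.exp (Complex.I * ((-(2*π/3) : ℝ):ℂ)) = 0 := by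
  have hc : Real.cos (2*π/3) = -(1/2) := by
    have h : (2*π/3) = π - π/3 := by ring
    rw [h, Real.cos_pi_sub, Real.cos_pi_div_three]
  apply Complex.ext
  · simp only [Complex.add_re, Complex.one_re, mul_comm Complex.I,
      Complex.exp_ofReal_mul_I_re, Complex.zero_re]
    rw [Real.cos_neg, hc]; ring
  · simp only [Complex.add_im, Complex.one_im, mul_comm Complex.I,
      Complex.exp_ofReal_mul_I_im, Complex.zero_im]
    rw [Real.sin_neg]; ring

lemma zero_backward (s₁ s₂ : ℤ) (h3 : (3:ℤ) ∣ s₁ - s₂) :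
    ∃ k₁ k₂ : ℝ,
      1 + Complex.exp (Complex.I * k₁) + Complex.exp (Complex.I * k₂) = 0 ∧
      ∃ n : ℤ, (s₁ : ℝ) * k₁ + (s₂ : ℝ) * k₂ = 2*π*n := by
  obtain ⟨d, hd⟩ := h3
  refine ⟨2*π/3, -(2*π/3), exp_zero_pt, d, ?_⟩
  have : (s₁ : ℝ) - s₂ = 3 * d := by exact_mod_cast congrArg (Int.cast : ℤ → ℝ) hd
  linear_combination (2*π/3) * this

lemma exp_two_pi_int (m : ℤ) : Complex.exp (Complex.I * ((2*π*m : ℝ):ℂ)) = 1 := by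
  rw [show Complex.I * ((2*π*m : ℝ):ℂ) = (m:ℂ) * (2 * (π:ℂ) * Complex.I) by push_cast; ring]
  exact Complex.exp_int_mul_two_pi_mul_I m

lemma wfun_at_lattice (m n : ℤ) : wfun (2*π*m) (2*π*n) = 9 := by
  rw [wfun, exp_two_pi_int, exp_two_pi_int]
  norm_num [Complex.normSq]

lemma wfun_at_zero : wfun (2*π/3) (-(2*π/3)) = 0 := by
  rw [wfun, exp_zero_pt]
  simp

lemma exists_w (t₁ t₂ : ℤ) (hcop : IsCoprime t₁ t₂) (h3 : (3:ℤ) ∣ t₁ - t₂)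
    (w₀ : ℝ) (hw0 : 0 ≤ w₀) (hw9 : w₀ ≤ 9) :
    ∃ k : ℝ × ℝ, (∃ n : ℤ, (t₁ : ℝ) * k.1 + (t₂ : ℝ) * k.2 = 2*π*n) ∧
      wfun k.1 k.2 = w₀ := by
  obtain ⟨d, hd⟩ := h3
  have ht₂ : t₂ ≠ 0 := by
    rintro rfl
    have h1 := Int.isUnit_iff.mp (isCoprime_zero_right.mp hcop)
    omega
  obtain ⟨a, b, hab⟩ := hcop
  set m : ℤ := a * d with hmdef
  set nn : ℤ := b * d with hndef
  have hmn : m * t₁ + nn * t₂ = d := by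
    rw [hmdef, hndef]
    linear_combination d * hab
  set s : ℝ := 2*π*(3*m - 1)/(3*t₂) with hs
  have ht₂R : (t₂ : ℝ) ≠ 0 := Int.cast_ne_zero.mpr ht₂
  set f : ℝ → ℝ := fun σ => wfun (2*π/3 + σ*t₂) (-(2*π/3) - σ*t₁) with hf
  have hcont : Continuous f := by
    apply Complex.continuous_normSq.comp
    fun_prop
  have hf0 : f 0 = 0 := by
    simp only [hf, zero_mul, add_zero, sub_zero]
    exact wfun_at_zero
  have hkey : (t₁ : ℝ) * (3*m - 1) = (t₂ : ℝ) * (-3*nn - 1) := by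
    have h1 : (t₁ : ℝ) - t₂ = 3 * d := by exact_mod_cast congrArg (Int.cast : ℤ → ℝ) hd
    have h2 : (m : ℝ) * t₁ + nn * t₂ = d := by exact_mod_cast congrArg (Int.cast : ℤ → ℝ) hmn
    linear_combination 3 * h2 - h1
  have hfs : f s = 9 := by
    have e1 : 2*π/3 + s*t₂ = 2*π*m := by
      rw [hs]; field_simp; ring
    have e2 : -(2*π/3) - s*t₁ = 2*π*nn := by
      have hst : s * t₁ = 2*π*(-3*nn-1)/3 := by
        rw [hs]
        rw [div_mul_eq_mul_div, mul_comm ((2:ℝ)*π*(3*(m:ℝ)-1))]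
        rw [show (t₁:ℝ) * (2*π*(3*(m:ℝ)-1)) = 2*π*((t₁:ℝ)*(3*(m:ℝ)-1)) by ring, hkey]
        field_simp
      rw [hst]
      field_simp
      ring
    simp only [hf]
    rw [e1, e2]
    exact wfun_at_lattice m nn
  have hsub := intermediate_value_uIcc (f := f) (a := 0) (b := s) hcont.continuousOn
  have hw : w₀ ∈ Set.uIcc (f 0) (f s) := by
    rw [hf0, hfs, Set.uIcc_of_le (by norm_num : (0:ℝ) ≤ 9)]
    exact ⟨hw0, hw9⟩
  obtain ⟨σ, _, hσ⟩ := hsub hw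
  refine ⟨(2*π/3 + σ*t₂, -(2*π/3) - σ*t₁), ⟨d, ?_⟩, hσ⟩
  have h1 : (t₁ : ℝ) - t₂ = 3 * d := by exact_mod_cast congrArg (Int.cast : ℤ → ℝ) hd
  push_cast
  linear_combination (2*π/3) * h1

/-- a nanotube with primitive chiral index `(t₁,t₂)` is isospectral to the
hexagonal lattice iff `3 ∣ t₁ − t₂`; moreover, for arbitrary integers `t₁, t₂`, the zero
set of `1+e^{ik₁}+e^{ik₂}` meets `{t₁k₁+t₂k₂ ∈ 2πℤ}` iff `3 ∣ t₁ − t₂`. -/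
theorem stmt_12 (q : ℝ) (hq : 0 < q) (t₁ t₂ : ℤ) (hcop : IsCoprime t₁ t₂) :
    ((⋃ k ∈ {k : ℝ × ℝ | ∃ n : ℤ, (t₁ : ℝ) * k.1 + (t₂ : ℝ) * k.2 = 2*π*n},
        spectrum ℂ (hexFloquet q k.1 k.2)) =
      (fun x : ℝ => (x : ℂ)) ''
        (Set.Icc (3 - Real.sqrt (9 + q^2)) (3 - q) ∪
         Set.Icc (3 + q) (3 + Real.sqrt (9 + q^2))) ↔ (3:ℤ) ∣ t₁ - t₂) ∧
    (∀ s₁ s₂ : ℤ,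
      ((∃ k₁ k₂ : ℝ,
          1 + Complex.exp (Complex.I * k₁) + Complex.exp (Complex.I * k₂) = 0 ∧
          ∃ n : ℤ, (s₁ : ℝ) * k₁ + (s₂ : ℝ) * k₂ = 2*π*n) ↔ (3:ℤ) ∣ s₁ - s₂)) := by
  have hsq9 : (Real.sqrt (9 + q^2))^2 = 9 + q^2 := Real.sq_sqrt (by positivity)
  have hsq9nn : 0 ≤ Real.sqrt (9 + q^2) := Real.sqrt_nonneg _
  have hqle : q ≤ Real.sqrt (9 + q^2) := by nlinarith
  constructor
  · constructor
    · -- equality implies 3 ∣ t₁ - t₂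
      intro heq
      have hmem : ((3 - q : ℝ):ℂ) ∈ (fun x : ℝ => (x : ℂ)) ''
          (Set.Icc (3 - Real.sqrt (9 + q^2)) (3 - q) ∪
           Set.Icc (3 + q) (3 + Real.sqrt (9 + q^2))) :=
        ⟨3 - q, Or.inl ⟨by linarith, le_refl _⟩, rfl⟩
      rw [← heq] at hmem
      rw [Set.mem_iUnion₂] at hmem
      obtain ⟨k, hk, hz⟩ := hmem
      rw [mem_spec_iff] at hz
      have hw0 : wfun k.1 k.2 = 0 := by
        have h0 : ((wfun k.1 k.2 : ℝ) : ℂ) = 0 := by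
          push_cast at hz
          linear_combination -hz
        exact_mod_cast h0
      have hc0 : 1 + Complex.exp (Complex.I * k.1) + Complex.exp (Complex.I * k.2) = 0 :=
        Complex.normSq_eq_zero.mp hw0
      obtain ⟨n, hn⟩ := hk
      exact zero_forward t₁ t₂ k.1 k.2 hc0 n hn
    · -- 3 ∣ t₁ - t₂ implies equality
      intro h3
      ext z
      constructor
      · intro hz
        rw [Set.mem_iUnion₂] at hz
        obtain ⟨k, hk, hzk⟩ := hz
        rw [spec_eq] at hzk
        set r := Real.sqrt (q^2 + wfun k.1 k.2) with hr
        have hw0 := wfun_nonneg k.1 k.2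
        have hw9 := wfun_le_nine k.1 k.2
        have hrsq : r^2 = q^2 + wfun k.1 k.2 := Real.sq_sqrt (by positivity)
        have hrnn : 0 ≤ r := Real.sqrt_nonneg _
        have hrq : q ≤ r := by nlinarith
        have hrup : r ≤ Real.sqrt (9 + q^2) := by nlinarith
        rcases hzk with h' | h'
        · exact ⟨3 - r, Or.inl ⟨by linarith, by linarith⟩, h'.symm⟩
        · rw [Set.mem_singleton_iff] at h'
          exact ⟨3 + r, Or.inr ⟨by linarith, by linarith⟩, h'.symm⟩
      · intro hz
        obtain ⟨x, hx, rfl⟩ := hz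
        rcases hx with hx | hx
        · have h3x : q ≤ 3 - x := by linarith [hx.2]
          have hup : 3 - x ≤ Real.sqrt (9 + q^2) := by linarith [hx.1]
          obtain ⟨k, hk, hwk⟩ := exists_w t₁ t₂ hcop h3 ((3-x)^2 - q^2)
            (by nlinarith) (by nlinarith)
          rw [Set.mem_iUnion₂]
          refine ⟨k, hk, ?_⟩
          rw [spec_eq, hwk]
          have hsr : Real.sqrt (q^2 + ((3-x)^2 - q^2)) = 3 - x := by
            rw [show q^2 + ((3-x)^2 - q^2) = (3-x)^2 by ring]
            exact Real.sqrt_sq (by linarith)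
          rw [hsr]
          left
          norm_num
        · have h3x : q ≤ x - 3 := by linarith [hx.1]
          have hup : x - 3 ≤ Real.sqrt (9 + q^2) := by linarith [hx.2]
          obtain ⟨k, hk, hwk⟩ := exists_w t₁ t₂ hcop h3 ((x-3)^2 - q^2)
            (by nlinarith) (by nlinarith)
          rw [Set.mem_iUnion₂]
          refine ⟨k, hk, ?_⟩
          rw [spec_eq, hwk]
          have hsr : Real.sqrt (q^2 + ((x-3)^2 - q^2)) = x - 3 := by
            rw [show q^2 + ((x-3)^2 - q^2) = (x-3)^2 by ring]
            exact Real.sqrt_sq (by linarith)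
          rw [hsr]
          right
          norm_num
  · intro s₁ s₂
    constructor
    · rintro ⟨k₁, k₂, h, n, hn⟩
      exact zero_forward s₁ s₂ k₁ k₂ h n hn
    · exact zero_backward s₁ s₂
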